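/- Let m₁, m₂ be basic probability assignments on a finite nonempty set Θ with D₁ > 0 and D₂ > 0, where Dᵢ = ∑_{A⊆Θ, |A|>1} |A|·mᵢ(A). For each cardinality k, set σ⁽ⁱ⁾_k = ∑_{A⊆Θ, |A|=k} mᵢ(A). If σ⁽¹⁾_l·σ⁽²⁾_j = σ⁽²⁾_l·σ⁽¹⁾_j for all l, j ≥ 2 (i.e., the ratio between the total masses of focal elements of different cardinalities is the same for both BPAs), then the intersection probability commutes with convex combination: p[α₁Bel₁ + α₂Bel₂](x) = α₁·p[Bel₁](x) + α₂·p[Bel₂](x) for all α₁ ∈ [0,1] (α₂ = 1 − α₁) and all x ∈ Θ. -/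
import Mathlib


open Finset

/-- A basic probability assignment on a finite set `Θ`. -/
def IsBPA {Θ : Type*} [Fintype Θ] (m : Finset Θ → ℝ) : Prop :=
  m ∅ = 0 ∧ (∀ A, 0 ≤ m A) ∧ (∑ A : Finset Θ, m A) = 1

/-- Belief function `Bel(A) = ∑_{B ⊆ A} m(B)`. -/
noncomputable def Bel {Θ : Type*} [Fintype Θ] [DecidableEq Θ] (m : Finset Θ → ℝ)
    (A : Finset Θ) : ℝ :=
  ∑ B ∈ A.powerset, m B

/-- Plausibility function `Pl(A) = ∑_{B ∩ A ≠ ∅} m(B)`. -/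
noncomputable def Pl {Θ : Type*} [Fintype Θ] [DecidableEq Θ] (m : Finset Θ → ℝ)
    (A : Finset Θ) : ℝ :=
  ∑ B ∈ Finset.univ.filter (fun B => B ∩ A ≠ ∅), m B

/-- Total mass of singletons `k_Bel`. -/
noncomputable def kBel {Θ : Type*} [Fintype Θ] (m : Finset Θ → ℝ) : ℝ :=
  ∑ x : Θ, m {x}

/-- Total plausibility of singletons `k_Pl`. -/
noncomputable def kPl {Θ : Type*} [Fintype Θ] [DecidableEq Θ] (m : Finset Θ → ℝ) : ℝ :=
  ∑ x : Θ, Pl m {x}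

/-- `β[Bel] = (1 - k_Bel)/(k_Pl - k_Bel)`. -/
noncomputable def betaBel {Θ : Type*} [Fintype Θ] [DecidableEq Θ] (m : Finset Θ → ℝ) : ℝ :=
  (1 - kBel m) / (kPl m - kBel m)

/-- The intersection probability `p[Bel](x) = m(x) + β[Bel]⬝(Pl(x) - m(x))`. -/
noncomputable def pInt {Θ : Type*} [Fintype Θ] [DecidableEq Θ] (m : Finset Θ → ℝ)
    (x : Θ) : ℝ :=
  m {x} + betaBel m * (Pl m {x} - m {x})

/-- `N = ∑_{|A| > 1} m(A)`, total mass of non-singleton focal elements. -/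
noncomputable def bigN {Θ : Type*} [Fintype Θ] (m : Finset Θ → ℝ) : ℝ :=
  ∑ A ∈ Finset.univ.filter (fun A : Finset Θ => 1 < A.card), m A

/-- `D = ∑_{|A| > 1} |A|⬝m(A)`. -/
noncomputable def bigD {Θ : Type*} [Fintype Θ] (m : Finset Θ → ℝ) : ℝ :=
  ∑ A ∈ Finset.univ.filter (fun A : Finset Θ => 1 < A.card), (A.card : ℝ) * m A

/-- `β = N/D`. -/
noncomputable def betaND {Θ : Type*} [Fintype Θ] (m : Finset Θ → ℝ) : ℝ :=
  bigN m / bigD m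

/-- Intersection probability `p[Bel](x) = m(x) + β⬝(Pl(x) - m(x))` with `β = N/D`. -/
noncomputable def pIntND {Θ : Type*} [Fintype Θ] [DecidableEq Θ]
    (m : Finset Θ → ℝ) (x : Θ) : ℝ :=
  m {x} + betaND m * (Pl m {x} - m {x})

/-- `σ_k = ∑_{|A| = k} m(A)`, total mass of focal elements of cardinality `k`. -/
noncomputable def sigmaCard {Θ : Type*} [Fintype Θ] (m : Finset Θ → ℝ) (k : ℕ) : ℝ :=
  ∑ A ∈ Finset.univ.filter (fun A : Finset Θ => A.card = k), m A

/-- Theorem 10: if the ratios between the total masses of focal elements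
of the various cardinalities `≥ 2` agree for the two BPAs, then the intersection
probability commutes with convex combination. -/
lemma bigN_eq_sum_sigma {Θ : Type*} [Fintype Θ] (m : Finset Θ → ℝ) :
    bigN m = ∑ k ∈ Finset.Icc 2 (Fintype.card Θ), sigmaCard m k := by
  rw [bigN, ← Finset.sum_fiberwise_of_maps_to (g := Finset.card)
    (t := Finset.Icc 2 (Fintype.card Θ)) ?_ m]
  · apply Finset.sum_congr rfl
    intro k hk
    rw [sigmaCard]
    apply Finset.sum_congr _ (fun _ _ => rfl)
    ext A
    simp only [Finset.mem_filter, Finset.mem_univ, true_and]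
    rw [Finset.mem_Icc] at hk
    constructor
    · exact fun h => h.2
    · intro h; exact ⟨by omega, h⟩
  · intro A hA
    simp only [Finset.mem_filter, Finset.mem_univ, true_and] at hA
    rw [Finset.mem_Icc]
    exact ⟨hA, Finset.card_le_univ A⟩

lemma bigD_eq_sum_sigma {Θ : Type*} [Fintype Θ] (m : Finset Θ → ℝ) :
    bigD m = ∑ k ∈ Finset.Icc 2 (Fintype.card Θ), (k : ℝ) * sigmaCard m k := by
  rw [bigD, ← Finset.sum_fiberwise_of_maps_to (g := Finset.card)
    (t := Finset.Icc 2 (Fintype.card Θ)) ?_ (fun A => (A.card : ℝ) * m A)]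
  · apply Finset.sum_congr rfl
    intro k hk
    rw [sigmaCard, Finset.mul_sum]
    rw [Finset.mem_Icc] at hk
    apply Finset.sum_congr
    · ext A
      simp only [Finset.mem_filter, Finset.mem_univ, true_and]
      constructor
      · exact fun h => h.2
      · intro h; exact ⟨by omega, h⟩
    · intro A hA
      simp only [Finset.mem_filter] at hA
      rw [hA.2]
  · intro A hA
    simp only [Finset.mem_filter, Finset.mem_univ, true_and] at hA
    rw [Finset.mem_Icc]
    exact ⟨hA, Finset.card_le_univ A⟩

theorem pInt_commutes_of_proportional_sigmas
    {Θ : Type*} [Fintype Θ] [DecidableEq Θ] [Nonempty Θ]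
    (m₁ m₂ : Finset Θ → ℝ) (hm₁ : IsBPA m₁) (hm₂ : IsBPA m₂)
    (hD₁ : 0 < bigD m₁) (hD₂ : 0 < bigD m₂)
    (hσ : ∀ l j : ℕ, 2 ≤ l → 2 ≤ j →
      sigmaCard m₁ l * sigmaCard m₂ j = sigmaCard m₂ l * sigmaCard m₁ j) :
    ∀ α₁ : ℝ, 0 ≤ α₁ → α₁ ≤ 1 → ∀ x : Θ,
      pIntND (fun A => α₁ * m₁ A + (1 - α₁) * m₂ A) x =
        α₁ * pIntND m₁ x + (1 - α₁) * pIntND m₂ x := by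
  -- cross identity N₁ D₂ = N₂ D₁
  have hND : bigN m₁ * bigD m₂ = bigN m₂ * bigD m₁ := by
    rw [bigN_eq_sum_sigma, bigN_eq_sum_sigma, bigD_eq_sum_sigma, bigD_eq_sum_sigma,
      Finset.sum_mul_sum, Finset.sum_mul_sum]
    apply Finset.sum_congr rfl
    intro l hl
    apply Finset.sum_congr rfl
    intro j hj
    rw [Finset.mem_Icc] at hl hj
    have h := hσ l j hl.1 hj.1
    nlinarith [h]
  intro α₁ hα0 hα1 x
  set α₂ : ℝ := 1 - α₁ with hα₂
  have hα₂0 : 0 ≤ α₂ := by simp [hα₂]; linarith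
  -- linearity
  have hNlin : bigN (fun A => α₁ * m₁ A + α₂ * m₂ A)
      = α₁ * bigN m₁ + α₂ * bigN m₂ := by
    simp [bigN, Finset.sum_add_distrib, Finset.mul_sum]
  have hDlin : bigD (fun A => α₁ * m₁ A + α₂ * m₂ A)
      = α₁ * bigD m₁ + α₂ * bigD m₂ := by
    simp only [bigD, mul_add, Finset.sum_add_distrib, Finset.mul_sum]
    congr 1 <;> apply Finset.sum_congr rfl <;> intros <;> ring
  have hPlin : Pl (fun A => α₁ * m₁ A + α₂ * m₂ A) {x}
      = α₁ * Pl m₁ {x} + α₂ * Pl m₂ {x} := by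
    simp [Pl, Finset.sum_add_distrib, Finset.mul_sum]
  -- denominator positivity
  have hDc : 0 < α₁ * bigD m₁ + α₂ * bigD m₂ := by
    rcases eq_or_lt_of_le hα0 with h | h
    · have h2 : α₂ = 1 := by simp [hα₂, ← h]
      rw [h2, ← h]
      simpa using hD₂
    · have := mul_pos h hD₁
      nlinarith [mul_nonneg hα₂0 hD₂.le]
  -- betas agree
  have hβ₂ : betaND m₂ = betaND m₁ := by
    rw [betaND, betaND, div_eq_div_iff hD₂.ne' hD₁.ne']
    linarith [hND]
  have hβc : betaND (fun A => α₁ * m₁ A + α₂ * m₂ A) = betaND m₁ := by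
    rw [betaND, hNlin, hDlin, betaND, div_eq_div_iff hDc.ne' hD₁.ne']
    nlinarith [hND]
  have key : pIntND (fun A => α₁ * m₁ A + α₂ * m₂ A) x
      = α₁ * pIntND m₁ x + α₂ * pIntND m₂ x := by
    rw [pIntND, pIntND, pIntND, hβc, hβ₂, hPlin]
    ring
  simpa [hα₂] using key
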